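/- Let s > 0, 0 ≤ τ ≤ 2s, let K be a finite set of positive integers and (c_k)_{k∈K} real numbers. Let F(K) = {d ≥ 1 : d divides some k ∈ K}. Then ∑_{k,ℓ∈K} c_k c_ℓ gcd(k,ℓ)^{2s}/(k^s ℓ^s) ≤ (∑_{u∈F(K)} 1/σ_τ(u)) · (∑_{ν∈K} c_ν² σ_{τ−2s}(ν)), where σ_h(n) = ∑_{d|n} d^h. -/

import Mathlib

open Finset ArithmeticFunction
open scoped ArithmeticFunction.zeta

noncomputable def rpf (h : ℝ) : ArithmeticFunction ℝ :=
  ⟨fun n => if n = 0 then 0 else (n : ℝ) ^ h, if_pos rfl⟩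

lemma rpf_apply {h : ℝ} {n : ℕ} (hn : n ≠ 0) : rpf h n = (n : ℝ) ^ h := if_neg hn

lemma rpf_mult (h : ℝ) : (rpf h).IsMultiplicative := by
  rw [ArithmeticFunction.IsMultiplicative.iff_ne_zero]
  constructor
  · rw [rpf_apply one_ne_zero]; simp
  · intro m n hm hn _
    rw [rpf_apply (Nat.mul_ne_zero hm hn), rpf_apply hm, rpf_apply hn, Nat.cast_mul,
      Real.mul_rpow (Nat.cast_nonneg m) (Nat.cast_nonneg n)]

noncomputable def gf (s : ℝ) : ArithmeticFunction ℝ :=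
  ((moebius : ArithmeticFunction ℤ) : ArithmeticFunction ℝ) * rpf (2 * s)

lemma gf_mult (s : ℝ) : (gf s).IsMultiplicative :=
  (isMultiplicative_moebius.intCast).mul (rpf_mult _)

lemma gf_mul_zeta (s : ℝ) : gf s * (ζ : ArithmeticFunction ℝ) = rpf (2 * s) := by
  unfold gf
  rw [mul_right_comm, coe_moebius_mul_coe_zeta, one_mul]

lemma sum_gf (s : ℝ) {n : ℕ} (hn : n ≠ 0) :
    ∑ u ∈ n.divisors, gf s u = (n : ℝ) ^ (2 * s) := by
  have := congrArg (fun f : ArithmeticFunction ℝ => f n) (gf_mul_zeta s)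
  rw [coe_mul_zeta_apply, rpf_apply hn] at this
  exact this

lemma gf_prime_pow_pos {s : ℝ} (hs : 0 < s) {p k : ℕ} (hp : p.Prime) (hk : k ≠ 0) :
    0 < gf s (p ^ k) := by
  have hp1 : (1:ℝ) < (p:ℝ) := by exact_mod_cast hp.one_lt
  have key : gf s (p ^ k) = ((p:ℝ) ^ (k:ℕ)) ^ (2*s) - ((p:ℝ) ^ (k-1:ℕ)) ^ (2*s) := by
    unfold gf
    rw [mul_apply,
      Nat.sum_divisorsAntidiagonal
        (f := fun a b => ((moebius : ArithmeticFunction ℤ) : ArithmeticFunction ℝ) a * rpf (2*s) b),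
      Nat.sum_divisors_prime_pow hp, Finset.sum_range_succ']
    simp only [intCoe_apply]
    have hterm : ∀ i ∈ Finset.range k,
        ((moebius (p ^ (i+1)) : ℤ) : ℝ) * rpf (2*s) (p ^ k / p ^ (i+1))
          = if i = 0 then -((p:ℝ) ^ (k-1:ℕ)) ^ (2*s) else 0 := by
      intro i hi
      rw [Finset.mem_range] at hi
      rw [moebius_apply_prime_pow hp (Nat.succ_ne_zero i)]
      rcases Nat.eq_zero_or_pos i with rfl | hipos
      · simp only [if_pos rfl]
        rw [Nat.pow_div (by omega) hp.pos, rpf_apply (pow_ne_zero _ hp.pos.ne'), Nat.cast_pow]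
        norm_num
      · rw [if_neg (by omega), if_neg (by omega)]
        norm_num
    rw [Finset.sum_congr rfl hterm, Finset.sum_ite_eq' (Finset.range k) 0
      (fun _ => -((p:ℝ) ^ (k-1:ℕ)) ^ (2*s)), if_pos (Finset.mem_range.2 (by omega))]
    rw [pow_zero, Nat.div_one]
    rw [moebius_apply_one, rpf_apply (pow_ne_zero _ hp.pos.ne'), Nat.cast_pow]
    push_cast
    ring
  rw [key]
  have : ((p:ℝ) ^ (k-1:ℕ)) ^ (2*s) < ((p:ℝ) ^ (k:ℕ)) ^ (2*s) := by
    apply Real.rpow_lt_rpow (by positivity)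
    · exact pow_lt_pow_right₀ hp1 (by omega)
    · linarith
  linarith

lemma gf_nonneg {s : ℝ} (hs : 0 < s) (n : ℕ) : 0 ≤ gf s n := by
  rcases Nat.eq_zero_or_pos n with rfl | hn
  · simp [ArithmeticFunction.map_zero]
  · rw [ArithmeticFunction.IsMultiplicative.multiplicative_factorization _ (gf_mult s) hn.ne']
    apply le_of_lt
    rw [Finsupp.prod]
    apply Finset.prod_pos
    intro p hp
    exact gf_prime_pow_pos hs (Nat.prime_of_mem_primeFactors (by
      rwa [Nat.support_factorization] at hp)) (Finsupp.mem_support_iff.mp hp)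

lemma conv_identity (s τ : ℝ) {k : ℕ} (hk : k ≠ 0) :
    ∑ u ∈ k.divisors, gf s u * (∑ e ∈ (k / u).divisors, (e : ℝ) ^ τ)
      = (k : ℝ) ^ (2 * s) * ∑ d ∈ k.divisors, (d : ℝ) ^ (τ - 2 * s) := by
  have hfun : gf s * ((ζ : ArithmeticFunction ℝ) * rpf τ) = rpf (2 * s) * rpf τ := by
    unfold gf
    rw [mul_mul_mul_comm, coe_moebius_mul_coe_zeta, one_mul]
  have := congrArg (fun f : ArithmeticFunction ℝ => f k) hfun
  rw [mul_apply, mul_apply,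
    Nat.sum_divisorsAntidiagonal
      (f := fun a b => gf s a * ((ζ : ArithmeticFunction ℝ) * rpf τ) b),
    Nat.sum_divisorsAntidiagonal' (f := fun a b => rpf (2 * s) a * rpf τ b)] at this
  calc ∑ u ∈ k.divisors, gf s u * (∑ e ∈ (k / u).divisors, (e : ℝ) ^ τ)
      = ∑ u ∈ k.divisors, gf s u * ((ζ : ArithmeticFunction ℝ) * rpf τ) (k / u) := by
        refine Finset.sum_congr rfl fun u hu => ?_
        rw [coe_zeta_mul_apply]
        congr 1
        refine Finset.sum_congr rfl fun e he => ?_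
        exact (rpf_apply (Nat.pos_of_mem_divisors he).ne').symm
    _ = ∑ e ∈ k.divisors, rpf (2 * s) (k / e) * rpf τ e := this
    _ = (k : ℝ) ^ (2 * s) * ∑ d ∈ k.divisors, (d : ℝ) ^ (τ - 2 * s) := by
        rw [Finset.mul_sum]
        refine Finset.sum_congr rfl fun e he => ?_
        obtain ⟨hdvd, -⟩ := Nat.mem_divisors.mp he
        have hepos : 0 < e := Nat.pos_of_mem_divisors he
        have hne : (e : ℝ) ≠ 0 := Nat.cast_ne_zero.mpr hepos.ne'
        have hdiv : k / e ≠ 0 := Nat.div_ne_zero_iff_of_dvd hdvd |>.mpr ⟨hk, hepos.ne'⟩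
        rw [rpf_apply hdiv, rpf_apply hepos.ne', Nat.cast_div hdvd hne,
          Real.div_rpow (Nat.cast_nonneg k) (Nat.cast_nonneg e),
          Real.rpow_sub (by exact_mod_cast hepos)]
        field_simp
noncomputable def Sg (τ : ℝ) (n : ℕ) : ℝ := ∑ d ∈ n.divisors, (d : ℝ) ^ τ

noncomputable def Af (s : ℝ) (c : ℕ → ℝ) (K : Finset ℕ) (u : ℕ) : ℝ :=
  ∑ k ∈ K.filter (fun k => u ∣ k), c k / (k : ℝ) ^ s

noncomputable def Pf (τ : ℝ) (K : Finset ℕ) (u : ℕ) : ℝ :=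
  ∑ k ∈ K.filter (fun k => u ∣ k), 1 / Sg τ (k / u)

noncomputable def Qf (s τ : ℝ) (c : ℕ → ℝ) (K : Finset ℕ) (u : ℕ) : ℝ :=
  ∑ k ∈ K.filter (fun k => u ∣ k), (c k) ^ 2 / ((k : ℝ) ^ s) ^ 2 * Sg τ (k / u)

lemma Sg_pos {τ : ℝ} {n : ℕ} (hn : n ≠ 0) : 0 < Sg τ n := by
  apply Finset.sum_pos
  · intro d hd
    exact Real.rpow_pos_of_pos (by exact_mod_cast Nat.pos_of_mem_divisors hd) τ
  · exact ⟨1, Nat.one_mem_divisors.mpr hn⟩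

lemma Sg_nonneg (τ : ℝ) (n : ℕ) : 0 ≤ Sg τ n :=
  Finset.sum_nonneg fun d _ => Real.rpow_nonneg (Nat.cast_nonneg d) τ

theorem gcd_sum_le_FC_sigma_bound (s τ : ℝ) (hs : 0 < s) (hτ0 : 0 ≤ τ) (hτ : τ ≤ 2 * s)
    (K : Finset ℕ) (hpos : ∀ k ∈ K, 0 < k) (c : ℕ → ℝ) :
    ∑ k ∈ K, ∑ l ∈ K,
        c k * c l * (Nat.gcd k l : ℝ) ^ (2 * s) / ((k : ℝ) ^ s * (l : ℝ) ^ s)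
      ≤ (∑ u ∈ K.biUnion Nat.divisors, 1 / ∑ d ∈ u.divisors, (d : ℝ) ^ τ)
          * ∑ ν ∈ K, (c ν) ^ 2 * ∑ d ∈ ν.divisors, (d : ℝ) ^ (τ - 2 * s) := by
  classical
  set F := K.biUnion Nat.divisors with hF
  have hkne : ∀ k ∈ K, k ≠ 0 := fun k hk => (hpos k hk).ne'
  have hdivsub : ∀ k ∈ K, k.divisors ⊆ F := fun k hk u hu => Finset.mem_biUnion.mpr ⟨k, hk, hu⟩
  have hquotne : ∀ u : ℕ, ∀ k ∈ K, u ∣ k → k / u ≠ 0 := by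
    intro u k hk hdvd
    have hu0 : u ≠ 0 := by rintro rfl; exact hkne k hk (zero_dvd_iff.mp hdvd)
    exact (Nat.div_ne_zero_iff_of_dvd hdvd).mpr ⟨hkne k hk, hu0⟩
  have hfilter : ∀ k ∈ K, F.filter (fun u => u ∣ k) = k.divisors := by
    intro k hk; ext u
    simp only [Finset.mem_filter, Nat.mem_divisors]
    constructor
    · rintro ⟨-, h⟩; exact ⟨h, hkne k hk⟩
    · rintro ⟨h, -⟩; exact ⟨hdivsub k hk (Nat.mem_divisors.mpr ⟨h, hkne k hk⟩), h⟩
  have hsetkl : ∀ k ∈ K, ∀ l ∈ K,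
      (Nat.gcd k l).divisors = F.filter (fun u => u ∣ k ∧ u ∣ l) := by
    intro k hk l hl; ext u
    simp only [Nat.mem_divisors, Finset.mem_filter]
    constructor
    · rintro ⟨hu, -⟩
      have huk := hu.trans (Nat.gcd_dvd_left k l)
      have hul := hu.trans (Nat.gcd_dvd_right k l)
      exact ⟨hdivsub k hk (Nat.mem_divisors.mpr ⟨huk, hkne k hk⟩), huk, hul⟩
    · rintro ⟨-, huk, hul⟩
      exact ⟨Nat.dvd_gcd huk hul, Nat.gcd_ne_zero_left (hkne k hk)⟩
  -- Step A
  have stepA : ∑ k ∈ K, ∑ l ∈ K,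
        c k * c l * (Nat.gcd k l : ℝ) ^ (2 * s) / ((k : ℝ) ^ s * (l : ℝ) ^ s)
      = ∑ u ∈ F, gf s u * Af s c K u ^ 2 := by
    calc ∑ k ∈ K, ∑ l ∈ K,
          c k * c l * (Nat.gcd k l : ℝ) ^ (2 * s) / ((k : ℝ) ^ s * (l : ℝ) ^ s)
        = ∑ k ∈ K, ∑ l ∈ K, ∑ u ∈ F, (if u ∣ k ∧ u ∣ l then
            gf s u * (c k / (k : ℝ) ^ s) * (c l / (l : ℝ) ^ s) else 0) := by
          refine Finset.sum_congr rfl fun k hk => Finset.sum_congr rfl fun l hl => ?_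
          have h1 : ((Nat.gcd k l : ℕ) : ℝ) ^ (2 * s)
              = ∑ u ∈ F, (if u ∣ k ∧ u ∣ l then gf s u else 0) := by
            rw [← Finset.sum_filter, ← hsetkl k hk l hl,
              sum_gf s (Nat.gcd_ne_zero_left (hkne k hk))]
          rw [h1, Finset.mul_sum, Finset.sum_div]
          refine Finset.sum_congr rfl fun u hu => ?_
          by_cases hcond : u ∣ k ∧ u ∣ l
          · rw [if_pos hcond, if_pos hcond]
            have hks : ((k : ℝ)) ^ s ≠ 0 :=
              (Real.rpow_pos_of_pos (by exact_mod_cast hpos k hk) s).ne'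
            have hls : ((l : ℝ)) ^ s ≠ 0 :=
              (Real.rpow_pos_of_pos (by exact_mod_cast hpos l hl) s).ne'
            field_simp
          · rw [if_neg hcond, if_neg hcond]
            simp
      _ = ∑ u ∈ F, ∑ k ∈ K, ∑ l ∈ K, (if u ∣ k ∧ u ∣ l then
            gf s u * (c k / (k : ℝ) ^ s) * (c l / (l : ℝ) ^ s) else 0) := by
          rw [show (∑ k ∈ K, ∑ l ∈ K, ∑ u ∈ F, (if u ∣ k ∧ u ∣ l then
              gf s u * (c k / (k : ℝ) ^ s) * (c l / (l : ℝ) ^ s) else 0))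
            = ∑ k ∈ K, ∑ u ∈ F, ∑ l ∈ K, (if u ∣ k ∧ u ∣ l then
              gf s u * (c k / (k : ℝ) ^ s) * (c l / (l : ℝ) ^ s) else 0) from
            Finset.sum_congr rfl fun k _ => Finset.sum_comm]
          exact Finset.sum_comm
      _ = ∑ u ∈ F, gf s u * Af s c K u ^ 2 := by
          refine Finset.sum_congr rfl fun u hu => Eq.symm ?_
          simp only [Af]
          rw [pow_two, Finset.sum_filter, Finset.sum_mul_sum, Finset.mul_sum]
          refine Finset.sum_congr rfl fun k hk => ?_
          rw [Finset.mul_sum]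
          refine Finset.sum_congr rfl fun l hl => ?_
          by_cases h1 : u ∣ k <;> by_cases h2 : u ∣ l <;> simp [h1, h2] <;> ring
  -- Step D
  have stepD : ∑ u ∈ F, gf s u * Qf s τ c K u
      = ∑ ν ∈ K, (c ν) ^ 2 * ∑ d ∈ ν.divisors, (d : ℝ) ^ (τ - 2 * s) := by
    calc ∑ u ∈ F, gf s u * Qf s τ c K u
        = ∑ u ∈ F, ∑ k ∈ K, (if u ∣ k then
            gf s u * ((c k) ^ 2 / ((k : ℝ) ^ s) ^ 2 * Sg τ (k / u)) else 0) := by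
          refine Finset.sum_congr rfl fun u hu => ?_
          simp only [Qf]
          rw [Finset.mul_sum, ← Finset.sum_filter]
      _ = ∑ k ∈ K, ∑ u ∈ F, (if u ∣ k then
            gf s u * ((c k) ^ 2 / ((k : ℝ) ^ s) ^ 2 * Sg τ (k / u)) else 0) := Finset.sum_comm
      _ = ∑ ν ∈ K, (c ν) ^ 2 * ∑ d ∈ ν.divisors, (d : ℝ) ^ (τ - 2 * s) := by
          refine Finset.sum_congr rfl fun k hk => ?_
          rw [← Finset.sum_filter, hfilter k hk]
          have hkpos : (0 : ℝ) < (k : ℝ) := by exact_mod_cast hpos k hk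
          have hks2 : ((k : ℝ) ^ s) ^ 2 = (k : ℝ) ^ (2 * s) := by
            rw [pow_two, ← Real.rpow_add hkpos, two_mul]
          have hksne : ((k : ℝ) ^ s) ^ 2 ≠ 0 := by
            rw [hks2]; exact (Real.rpow_pos_of_pos hkpos _).ne'
          calc ∑ u ∈ k.divisors, gf s u * ((c k) ^ 2 / ((k : ℝ) ^ s) ^ 2 * Sg τ (k / u))
              = (c k) ^ 2 / ((k : ℝ) ^ s) ^ 2
                  * ∑ u ∈ k.divisors, gf s u * ∑ d ∈ (k / u).divisors, (d : ℝ) ^ τ := by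
                rw [Finset.mul_sum]
                exact Finset.sum_congr rfl fun u hu => by simp only [Sg]; ring
            _ = (c k) ^ 2 / ((k : ℝ) ^ s) ^ 2
                  * ((k : ℝ) ^ (2 * s) * ∑ d ∈ k.divisors, (d : ℝ) ^ (τ - 2 * s)) := by
                rw [conv_identity s τ (hkne k hk)]
            _ = (c k) ^ 2 * ∑ d ∈ k.divisors, (d : ℝ) ^ (τ - 2 * s) := by
                rw [← hks2]; field_simp
  -- Step B and C combined
  have stepBC : ∀ u ∈ F, gf s u * Af s c K u ^ 2
      ≤ (∑ m ∈ F, 1 / ∑ d ∈ m.divisors, (d : ℝ) ^ τ) * (gf s u * Qf s τ c K u) := by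
    intro u hu
    have hgnn : 0 ≤ gf s u := gf_nonneg hs u
    have hQnn : 0 ≤ Qf s τ c K u := by
      apply Finset.sum_nonneg
      intro k hk
      exact mul_nonneg (div_nonneg (sq_nonneg _) (sq_nonneg _)) (Sg_nonneg _ _)
    have hCS : Af s c K u ^ 2 ≤ Pf τ K u * Qf s τ c K u := by
      simp only [Af, Pf, Qf]
      apply Finset.sum_sq_le_sum_mul_sum_of_sq_eq_mul
      · intro k hk
        exact one_div_nonneg.mpr (Sg_nonneg _ _)
      · intro k hk
        exact mul_nonneg (div_nonneg (sq_nonneg _) (sq_nonneg _)) (Sg_nonneg _ _)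
      · intro k hk
        obtain ⟨hkK, hdvd⟩ := Finset.mem_filter.mp hk
        have hσne : Sg τ (k / u) ≠ 0 := (Sg_pos (hquotne u k hkK hdvd)).ne'
        rw [div_pow]
        field_simp
    have hPT : Pf τ K u ≤ ∑ m ∈ F, 1 / ∑ d ∈ m.divisors, (d : ℝ) ^ τ := by
      have hinj : ∀ k1 ∈ K.filter (fun k => u ∣ k), ∀ k2 ∈ K.filter (fun k => u ∣ k),
          k1 / u = k2 / u → k1 = k2 := by
        intro k1 h1 k2 h2 he
        obtain ⟨-, hd1⟩ := Finset.mem_filter.mp h1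
        obtain ⟨-, hd2⟩ := Finset.mem_filter.mp h2
        rw [← Nat.mul_div_cancel' hd1, ← Nat.mul_div_cancel' hd2, he]
      have himg : Pf τ K u = ∑ m ∈ (K.filter (fun k => u ∣ k)).image (fun k => k / u),
          1 / Sg τ m := by
        simp only [Pf]
        exact (Finset.sum_image (f := fun m => 1 / Sg τ m) hinj).symm
      rw [himg]
      have hsub : (K.filter (fun k => u ∣ k)).image (fun k => k / u) ⊆ F := by
        intro m hm
        obtain ⟨k, hkf, rfl⟩ := Finset.mem_image.mp hm
        obtain ⟨hkK, hdvd⟩ := Finset.mem_filter.mp hkf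
        exact hdivsub k hkK (Nat.mem_divisors.mpr ⟨Nat.div_dvd_of_dvd hdvd, hkne k hkK⟩)
      have := Finset.sum_le_sum_of_subset_of_nonneg hsub
        (fun m _ _ => one_div_nonneg.mpr (Sg_nonneg τ m))
      simpa only [Sg] using this
    calc gf s u * Af s c K u ^ 2
        ≤ gf s u * (Pf τ K u * Qf s τ c K u) := mul_le_mul_of_nonneg_left hCS hgnn
      _ = Pf τ K u * (gf s u * Qf s τ c K u) := by ring
      _ ≤ (∑ m ∈ F, 1 / ∑ d ∈ m.divisors, (d : ℝ) ^ τ) * (gf s u * Qf s τ c K u) :=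
          mul_le_mul_of_nonneg_right hPT (mul_nonneg hgnn hQnn)
  calc ∑ k ∈ K, ∑ l ∈ K,
        c k * c l * (Nat.gcd k l : ℝ) ^ (2 * s) / ((k : ℝ) ^ s * (l : ℝ) ^ s)
      = ∑ u ∈ F, gf s u * Af s c K u ^ 2 := stepA
    _ ≤ ∑ u ∈ F, (∑ m ∈ F, 1 / ∑ d ∈ m.divisors, (d : ℝ) ^ τ) * (gf s u * Qf s τ c K u) :=
        Finset.sum_le_sum stepBC
    _ = (∑ m ∈ F, 1 / ∑ d ∈ m.divisors, (d : ℝ) ^ τ) * ∑ u ∈ F, gf s u * Qf s τ c K u :=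
        (Finset.mul_sum _ _ _).symm
    _ = _ := by rw [stepD]
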